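/- Let Λ be a locally convex k-graph and λ ∈ Λ^{≤ m+n}. Then μ := λ(0, m ∧ d(λ)) and ν := λ(m ∧ d(λ), d(λ)) are the unique paths with μ ∈ Λ^{≤m}, ν ∈ Λ^{≤n}, and λ = μν. -/

import Mathlib

/-- A `k`-graph: a countable category `Λ` with a degree functor `d : Λ → ℕ^k`
satisfying the factorisation property. Morphisms form the type `Mor`,
objects (vertices) the type `Obj`. -/
structure KGraph (k : ℕ) where
  Obj : Type
  Mor : Type
  countableObj : Countable Obj
  countableMor : Countable Mor
  r : Mor → Obj
  s : Mor → Obj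
  d : Mor → (Fin k → ℕ)
  id : Obj → Mor
  comp : ∀ μ ν : Mor, s μ = r ν → Mor
  r_id : ∀ v, r (id v) = v
  s_id : ∀ v, s (id v) = v
  d_id : ∀ v, d (id v) = 0
  r_comp : ∀ μ ν h, r (comp μ ν h) = r μ
  s_comp : ∀ μ ν h, s (comp μ ν h) = s ν
  d_comp : ∀ μ ν h, d (comp μ ν h) = d μ + d ν
  id_comp : ∀ μ : Mor, comp (id (r μ)) μ (s_id (r μ)) = μ
  comp_id : ∀ μ : Mor, comp μ (id (s μ)) ((r_id (s μ)).symm) = μ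
  assoc : ∀ (μ ν ρ : Mor) (h₁ : s μ = r ν) (h₂ : s ν = r ρ),
    comp (comp μ ν h₁) ρ ((s_comp μ ν h₁).trans h₂)
      = comp μ (comp ν ρ h₂) (h₁.trans (r_comp ν ρ h₂).symm)
  factor : ∀ (lam : Mor) (m n : Fin k → ℕ), d lam = m + n →
    ∃! p : {q : Mor × Mor // s q.1 = r q.2},
      d p.val.1 = m ∧ d p.val.2 = n ∧ lam = comp p.val.1 p.val.2 p.property

namespace KGraph

variable {k : ℕ} (Λ : KGraph k)

/-- `μ` is an initial segment of `lam`, i.e. `lam = μρ` for some `ρ`. -/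
def InitSeg (μ lam : Λ.Mor) : Prop :=
  ∃ (ρ : Λ.Mor) (h : Λ.s μ = Λ.r ρ), lam = Λ.comp μ ρ h

/-- The set of minimal common extensions of `μ` and `ν`. -/
def MCE (μ ν : Λ.Mor) : Set Λ.Mor :=
  {lam | Λ.d lam = Λ.d μ ⊔ Λ.d ν ∧ Λ.InitSeg μ lam ∧ Λ.InitSeg ν lam}

/-- `Λ` is finitely aligned if all `MCE` sets are finite. -/
def FinitelyAligned : Prop := ∀ μ ν : Λ.Mor, (Λ.MCE μ ν).Finite

/-- Aperiodicity: distinct paths with the same source admit a common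
extension `τ` with `MCE (ατ, βτ) = ∅`. -/
def Aperiodic : Prop :=
  ∀ α β : Λ.Mor, α ≠ β → Λ.s α = Λ.s β →
    ∃ (τ : Λ.Mor) (hα : Λ.s α = Λ.r τ) (hβ : Λ.s β = Λ.r τ),
      Λ.MCE (Λ.comp α τ hα) (Λ.comp β τ hβ) = ∅

/-- `E` is a finite exhaustive subset of `vΛ`. -/
def IsFE (v : Λ.Obj) (E : Set Λ.Mor) : Prop :=
  E.Finite ∧ (∀ α ∈ E, Λ.r α = v) ∧
    ∀ μ : Λ.Mor, Λ.r μ = v → ∃ lam ∈ E, (Λ.MCE μ lam).Nonempty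

/-- The segment `lam(p,q)` of a path `lam`, for `p ≤ q ≤ d lam`,
obtained from the factorisation property. -/
noncomputable def seg (lam : Λ.Mor) (p q : Fin k → ℕ) (hpq : p ≤ q) (hq : q ≤ Λ.d lam) :
    Λ.Mor := by
  have h1 : Λ.d lam = p + (Λ.d lam - p) := by
    funext i; exact (Nat.add_sub_cancel' ((hpq.trans hq) i)).symm
  have hspec := (Λ.factor lam p (Λ.d lam - p) h1).exists.choose_spec
  refine (Λ.factor ((Λ.factor lam p (Λ.d lam - p) h1).exists.choose).val.2
      (q - p) (Λ.d lam - q) ?_).exists.choose.val.1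
  rw [hspec.2.1]
  funext i
  have h3 : p i ≤ q i := hpq i
  have h4 : q i ≤ Λ.d lam i := hq i
  simp only [Pi.sub_apply, Pi.add_apply]
  omega

/-- A (possibly infinite) path in `Λ`: a degree-preserving functor from
`Ω_{k,m}` (for `m = deg ∈ (ℕ ∪ {∞})^k`) to `Λ`, recorded by its segments. -/
structure InfPath (Λ : KGraph k) where
  deg : Fin k → ℕ∞
  seg : ∀ p q : Fin k → ℕ, p ≤ q → (∀ i, (q i : ℕ∞) ≤ deg i) → Λ.Mor
  d_seg : ∀ p q hpq hq, Λ.d (seg p q hpq hq) = q - p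
  comp_seg : ∀ (p q r : Fin k → ℕ) (hpq : p ≤ q) (hqr : q ≤ r)
      (hq : ∀ i, (q i : ℕ∞) ≤ deg i) (hr : ∀ i, (r i : ℕ∞) ≤ deg i),
    ∃ h : Λ.s (seg p q hpq hq) = Λ.r (seg q r hqr hr),
      Λ.comp (seg p q hpq hq) (seg q r hqr hr) h = seg p r (hpq.trans hqr) hr

/-- The vertex `x(n)` of an infinite path. -/
def InfPath.vert {Λ : KGraph k} (x : Λ.InfPath) (n : Fin k → ℕ) (hn : ∀ i, (n i : ℕ∞) ≤ x.deg i) : Λ.Obj :=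
  Λ.r (x.seg n n le_rfl hn)

/-- The range `r(x) = x(0)` of an infinite path. -/
def InfPath.rng {Λ : KGraph k} (x : Λ.InfPath) : Λ.Obj :=
  Λ.r (x.seg 0 0 le_rfl (fun i => by simp))

/-- `x` is a boundary path: it hits every finite exhaustive set. -/
def IsBoundary (x : Λ.InfPath) : Prop :=
  ∀ (n : Fin k → ℕ) (hn : ∀ i, (n i : ℕ∞) ≤ x.deg i) (E : Set Λ.Mor),
    Λ.IsFE (x.vert n hn) E →
    ∃ (p : Fin k → ℕ) (hp : ∀ i, ((n + p) i : ℕ∞) ≤ x.deg i),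
      x.seg n (n + p) le_self_add hp ∈ E

/-- The set of boundary paths with range `v` is `v∂Λ`. -/

private lemma enat_aux {a b : ℕ} {D : ℕ∞} (h2 : (a : ℕ∞) ≤ D) (h1 : (b : ℕ∞) ≤ D - a) :
    ((a + b : ℕ) : ℕ∞) ≤ D := by
  cases D with
  | top => exact le_top
  | coe dN =>
    have ha : a ≤ dN := by exact_mod_cast h2
    rw [← ENat.coe_sub] at h1
    have hb : b ≤ dN - a := by exact_mod_cast h1
    exact_mod_cast (by omega : a + b ≤ dN)

/-- The shifted path `σ^m(x)`. -/
def InfPath.shift {Λ : KGraph k} (x : Λ.InfPath) (m : Fin k → ℕ) (hm : ∀ i, (m i : ℕ∞) ≤ x.deg i) :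
    Λ.InfPath where
  deg := fun i => x.deg i - (m i : ℕ∞)
  seg := fun p q hpq hq => x.seg (m + p) (m + q) (add_le_add_right hpq m)
    (fun i => by
      have := enat_aux (hm i) (hq i)
      simpa using this)
  d_seg := fun p q hpq hq => by
    rw [x.d_seg]
    funext i
    simp only [Pi.sub_apply, Pi.add_apply]
    omega
  comp_seg := fun p q r hpq hqr hq hr =>
    x.comp_seg (m + p) (m + q) (m + r) (add_le_add_right hpq m) (add_le_add_right hqr m) _ _

/-- `w = lam · z` : the path `w` extends `z` by the finite path `lam`,
i.e. `w(0, d lam) = lam` and `σ^{d lam}(w) = z`. -/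
def InfPath.ExtendsBy {Λ : KGraph k} (w z : Λ.InfPath) (lam : Λ.Mor) : Prop :=
  ∃ h : ∀ i, ((Λ.d lam) i : ℕ∞) ≤ w.deg i,
    w.seg 0 (Λ.d lam) (zero_le) h = lam ∧ w.shift (Λ.d lam) h = z

/-- Local periodicity `m, n` at `v`. -/
def LocalPeriodicity (m n : Fin k → ℕ) (v : Λ.Obj) : Prop :=
  ∀ x : Λ.InfPath, Λ.IsBoundary x → x.rng = v →
    (∀ i, (((m ⊔ n) i : ℕ) : ℕ∞) ≤ x.deg i) ∧
    ∃ (hm : ∀ i, (m i : ℕ∞) ≤ x.deg i) (hn : ∀ i, (n i : ℕ∞) ≤ x.deg i),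
      x.shift m hm = x.shift n hn

/-- Cofinality of `Λ`, stated in terms of finite paths. -/
def Cofinal : Prop :=
  ∀ v w : Λ.Obj, ∃ E : Set Λ.Mor, Λ.IsFE w E ∧
    ∀ α ∈ E, ∃ lam : Λ.Mor, Λ.r lam = v ∧ Λ.s lam = Λ.s α


/-- Membership in `Λ^{≤ n}`. -/
def LeSet (lam : Λ.Mor) (n : Fin k → ℕ) : Prop :=
  Λ.d lam ≤ n ∧ ∀ i : Fin k, Λ.d lam i < n i →
    ¬ ∃ g : Λ.Mor, Λ.d g = Pi.single i 1 ∧ Λ.r g = Λ.s lam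

/-- Local convexity of `Λ`. -/
def LocallyConvex : Prop :=
  ∀ (i j : Fin k), i ≠ j → ∀ e f : Λ.Mor,
    Λ.d e = Pi.single i 1 → Λ.d f = Pi.single j 1 → Λ.r e = Λ.r f →
      (∃ g, Λ.d g = Pi.single j 1 ∧ Λ.r g = Λ.s e) ∧
      (∃ g, Λ.d g = Pi.single i 1 ∧ Λ.r g = Λ.s f)

/-- Row-finiteness of `Λ`. -/
def RowFinite : Prop :=
  ∀ (v : Λ.Obj) (n : Fin k → ℕ), {lam : Λ.Mor | Λ.r lam = v ∧ Λ.d lam = n}.Finite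

lemma factor_choose_eq (lam : Λ.Mor) (p q : Fin k → ℕ) (hd : Λ.d lam = p + q)
    (μ ν : Λ.Mor) (hsr : Λ.s μ = Λ.r ν)
    (h1 : Λ.d μ = p) (h2 : Λ.d ν = q) (h3 : lam = Λ.comp μ ν hsr) :
    (Λ.factor lam p q hd).exists.choose = ⟨(μ, ν), hsr⟩ :=
  (Λ.factor lam p q hd).unique (Λ.factor lam p q hd).exists.choose_spec ⟨h1, h2, h3⟩

lemma factor_fst_eq (lam : Λ.Mor) (p q : Fin k → ℕ) (hd : Λ.d lam = p + q)
    (μ ν : Λ.Mor) (hsr : Λ.s μ = Λ.r ν)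
    (h1 : Λ.d μ = p) (h2 : Λ.d ν = q) (h3 : lam = Λ.comp μ ν hsr) :
    ((Λ.factor lam p q hd).exists.choose).val.1 = μ := by
  rw [Λ.factor_choose_eq lam p q hd μ ν hsr h1 h2 h3]

lemma factor_snd_eq (lam : Λ.Mor) (p q : Fin k → ℕ) (hd : Λ.d lam = p + q)
    (μ ν : Λ.Mor) (hsr : Λ.s μ = Λ.r ν)
    (h1 : Λ.d μ = p) (h2 : Λ.d ν = q) (h3 : lam = Λ.comp μ ν hsr) :
    ((Λ.factor lam p q hd).exists.choose).val.2 = ν := by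
  rw [Λ.factor_choose_eq lam p q hd μ ν hsr h1 h2 h3]

lemma d_zero_eq_id (lam : Λ.Mor) (hd : Λ.d lam = 0) : lam = Λ.id (Λ.r lam) := by
  have h0 : Λ.d lam = 0 + 0 := by rw [hd]; simp
  have h1 := Λ.factor_choose_eq lam 0 0 h0 lam (Λ.id (Λ.s lam)) (Λ.r_id (Λ.s lam)).symm
    hd (Λ.d_id _) (Λ.comp_id lam).symm
  have h2 := Λ.factor_choose_eq lam 0 0 h0 (Λ.id (Λ.r lam)) lam (Λ.s_id (Λ.r lam))
    (Λ.d_id _) hd (Λ.id_comp lam).symm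
  have := h1.symm.trans h2
  exact congrArg (fun z => z.val.1) this

lemma seg_eq (lam : Λ.Mor) (p q : Fin k → ℕ) (hpq : p ≤ q) (hq : q ≤ Λ.d lam)
    (a b c : Λ.Mor) (hab : Λ.s a = Λ.r b) (hbc : Λ.s b = Λ.r c)
    (hda : Λ.d a = p) (hdb : Λ.d b = q - p)
    (hlam : lam = Λ.comp a (Λ.comp b c hbc) (hab.trans (Λ.r_comp b c hbc).symm)) :
    Λ.seg lam p q hpq hq = b := by
  have hdc : Λ.d c = Λ.d lam - q := by
    have := Λ.d_comp a (Λ.comp b c hbc) (hab.trans (Λ.r_comp b c hbc).symm)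
    rw [← hlam, Λ.d_comp b c hbc] at this
    funext i
    have h1 := congrFun this i
    have h2 := congrFun hda i
    have h3 := congrFun hdb i
    have h4 : p i ≤ q i := hpq i
    have h5 : q i ≤ Λ.d lam i := hq i
    simp only [Pi.add_apply, Pi.sub_apply] at *
    omega
  have hdbc : Λ.d (Λ.comp b c hbc) = Λ.d lam - p := by
    rw [Λ.d_comp b c hbc, hdb, hdc]
    funext i
    have h4 : p i ≤ q i := hpq i
    have h5 : q i ≤ Λ.d lam i := hq i
    simp only [Pi.add_apply, Pi.sub_apply]
    omega
  have hd1 : Λ.d lam = p + (Λ.d lam - p) := by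
    funext i
    have h : p i ≤ Λ.d lam i := (hpq.trans hq) i
    simp only [Pi.add_apply, Pi.sub_apply]
    omega
  have hsnd := Λ.factor_snd_eq lam p (Λ.d lam - p) hd1 a (Λ.comp b c hbc) _ hda hdbc hlam
  have hsum : Λ.d ((Λ.factor lam p (Λ.d lam - p) hd1).exists.choose).val.2
      = (q - p) + (Λ.d lam - q) := by
    rw [hsnd, hdbc]
    funext i
    have h4 : p i ≤ q i := hpq i
    have h5 : q i ≤ Λ.d lam i := hq i
    simp only [Pi.add_apply, Pi.sub_apply]
    omega
  unfold seg
  exact Λ.factor_fst_eq _ (q - p) (Λ.d lam - q) hsum b c hbc hdb hdc hsnd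

lemma id_comp' (μ : Λ.Mor) (v : Λ.Obj) (hv : Λ.r μ = v) (h : Λ.s (Λ.id v) = Λ.r μ) :
    Λ.comp (Λ.id v) μ h = μ := by subst hv; exact Λ.id_comp μ

lemma comp_id' (μ : Λ.Mor) (v : Λ.Obj) (hv : Λ.s μ = v) (h : Λ.s μ = Λ.r (Λ.id v)) :
    Λ.comp μ (Λ.id v) h = μ := by subst hv; exact Λ.comp_id μ

lemma comp_congr (μ μ' ν ν' : Λ.Mor) (hμ : μ = μ') (hν : ν = ν')
    (h : Λ.s μ = Λ.r ν) (h' : Λ.s μ' = Λ.r ν') :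
    Λ.comp μ ν h = Λ.comp μ' ν' h' := by subst hμ; subst hν; rfl

lemma exists_first_edge (ν : Λ.Mor) (j : Fin k) (hj : 0 < Λ.d ν j) :
    ∃ (f ν' : Λ.Mor) (hf : Λ.s f = Λ.r ν'), Λ.d f = Pi.single j 1 ∧
      Λ.d ν' = Λ.d ν - Pi.single j 1 ∧ ν = Λ.comp f ν' hf ∧ Λ.r f = Λ.r ν := by
  have hd : Λ.d ν = Pi.single j 1 + (Λ.d ν - Pi.single j 1) := by
    funext i
    rcases eq_or_ne i j with rfl | hij
    · simp only [Pi.add_apply, Pi.sub_apply, Pi.single_eq_same]; omega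
    · simp only [Pi.add_apply, Pi.sub_apply, Pi.single_eq_of_ne hij]; omega
  obtain ⟨⟨⟨f, ν'⟩, hf⟩, ⟨h1, h2, h3⟩, -⟩ := Λ.factor ν (Pi.single j 1) (Λ.d ν - Pi.single j 1) hd
  exact ⟨f, ν', hf, h1, h2, h3, by rw [h3, Λ.r_comp]⟩

lemma edge_propagate (hlc : Λ.LocallyConvex) :
    ∀ (N : ℕ) (ν : Λ.Mor) (i : Fin k), (∑ j, Λ.d ν j) = N → Λ.d ν i = 0 →
    (∃ g, Λ.d g = Pi.single i 1 ∧ Λ.r g = Λ.r ν) →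
    ∃ g, Λ.d g = Pi.single i 1 ∧ Λ.r g = Λ.s ν := by
  intro N
  induction N using Nat.strong_induction_on with
  | _ N IH =>
    rintro ν i hN hi ⟨g, hg1, hg2⟩
    by_cases h0 : Λ.d ν = 0
    · have hid := Λ.d_zero_eq_id ν h0
      have hsr : Λ.s ν = Λ.r ν := by
        calc Λ.s ν = Λ.s (Λ.id (Λ.r ν)) := by rw [← hid]
        _ = Λ.r ν := Λ.s_id _
      exact ⟨g, hg1, hg2.trans hsr.symm⟩
    · obtain ⟨j, hj⟩ := Function.ne_iff.mp h0
      have hjpos : 0 < Λ.d ν j := by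
        simpa using Nat.pos_of_ne_zero (by simpa using hj)
      have hij : (i : Fin k) ≠ j := by
        intro hcon; rw [hcon] at hi; omega
      obtain ⟨f, ν', hf, hdf, hdν', hν, hrf⟩ := Λ.exists_first_edge ν j hjpos
      obtain ⟨-, g2, hg2d, hg2r⟩ := hlc i j hij g f hg1 hdf (hg2.trans hrf.symm)
      have hsum : (∑ t, Λ.d ν' t) < N := by
        rw [← hN]
        apply Finset.sum_lt_sum
        · intro t _
          rw [hdν']
          simp only [Pi.sub_apply]
          omega
        · refine ⟨j, Finset.mem_univ j, ?_⟩
          rw [hdν']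
          simp only [Pi.sub_apply, Pi.single_eq_same]
          omega
      have hν'i : Λ.d ν' i = 0 := by
        rw [hdν']
        simp only [Pi.sub_apply]
        omega
      have hsν : Λ.s ν' = Λ.s ν := by rw [hν, Λ.s_comp]
      have := IH _ hsum ν' i rfl hν'i ⟨g2, hg2d, hg2r.trans hf⟩
      rwa [hsν] at this

/-- In a locally convex `k`-graph, each `λ ∈ Λ^{≤ m+n}` factors uniquely
as `λ = μν` with `μ = λ(0, m ∧ d λ) ∈ Λ^{≤ m}` and
`ν = λ(m ∧ d λ, d λ) ∈ Λ^{≤ n}`. -/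
theorem locally_convex_unique_factorisation (hlc : Λ.LocallyConvex)
    (m n : Fin k → ℕ) (lam : Λ.Mor) (hlam : Λ.LeSet lam (m + n)) :
    Λ.LeSet (Λ.seg lam 0 (m ⊓ Λ.d lam) (zero_le) inf_le_right) m ∧
    Λ.LeSet (Λ.seg lam (m ⊓ Λ.d lam) (Λ.d lam) inf_le_right le_rfl) n ∧
    (∃ h, Λ.comp (Λ.seg lam 0 (m ⊓ Λ.d lam) (zero_le) inf_le_right)
                 (Λ.seg lam (m ⊓ Λ.d lam) (Λ.d lam) inf_le_right le_rfl) h = lam) ∧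
    ∀ (μ ν : Λ.Mor) (h : Λ.s μ = Λ.r ν), Λ.LeSet μ m → Λ.LeSet ν n →
      Λ.comp μ ν h = lam →
      μ = Λ.seg lam 0 (m ⊓ Λ.d lam) (zero_le) inf_le_right ∧
      ν = Λ.seg lam (m ⊓ Λ.d lam) (Λ.d lam) inf_le_right le_rfl := by
  classical
  set p : Fin k → ℕ := m ⊓ Λ.d lam with hp
  have hpi : ∀ i, p i = min (m i) (Λ.d lam i) := by
    intro i; simp [hp, Pi.inf_apply]
  have hmn : ∀ i, Λ.d lam i ≤ m i + n i := by
    intro i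
    have := hlam.1 i
    simpa using this
  have hd1 : Λ.d lam = p + (Λ.d lam - p) := by
    funext i
    simp only [Pi.add_apply, Pi.sub_apply, hpi]
    omega
  obtain ⟨⟨⟨μ₀, ν₀⟩, h₀⟩, ⟨hdμ₀, hdν₀, hcomp₀⟩, -⟩ := Λ.factor lam p (Λ.d lam - p) hd1
  have hrμ₀ : Λ.r μ₀ = Λ.r lam := by rw [hcomp₀, Λ.r_comp]
  have hsν₀ : Λ.s ν₀ = Λ.s lam := by rw [hcomp₀, Λ.s_comp]
  -- identify the two segments
  have hμseg : Λ.seg lam 0 p (zero_le) inf_le_right = μ₀ := by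
    refine Λ.seg_eq lam 0 p (zero_le) inf_le_right (Λ.id (Λ.r lam)) μ₀ ν₀
      (by rw [Λ.s_id]; exact hrμ₀.symm) h₀ (Λ.d_id _) (by rw [hdμ₀]; funext i; simp) ?_
    exact hcomp₀.trans (Λ.id_comp' (Λ.comp μ₀ ν₀ h₀) (Λ.r lam)
      (by rw [Λ.r_comp]; exact hrμ₀) _).symm
  have hνseg : Λ.seg lam p (Λ.d lam) inf_le_right le_rfl = ν₀ := by
    have hbc : Λ.s ν₀ = Λ.r (Λ.id (Λ.s lam)) := by rw [Λ.r_id]; exact hsν₀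
    refine Λ.seg_eq lam p (Λ.d lam) inf_le_right le_rfl μ₀ ν₀ (Λ.id (Λ.s lam))
      h₀ hbc hdμ₀ hdν₀ ?_
    refine hcomp₀.trans (Λ.comp_congr μ₀ μ₀ ν₀ (Λ.comp ν₀ (Λ.id (Λ.s lam)) hbc) rfl ?_ _ _)
    exact (Λ.comp_id' ν₀ (Λ.s lam) hsν₀ hbc).symm
  rw [hμseg, hνseg]
  have hdν₀i : ∀ i, Λ.d ν₀ i = Λ.d lam i - p i := by
    intro i; rw [hdν₀]; simp [Pi.sub_apply]
  -- no i-edge at source of ν₀ when d lam i < (m+n) i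
  have hnoedge : ∀ i : Fin k, Λ.d lam i < m i + n i →
      ¬ ∃ g : Λ.Mor, Λ.d g = Pi.single i 1 ∧ Λ.r g = Λ.s ν₀ := by
    intro i hi hex
    rw [hsν₀] at hex
    exact hlam.2 i (by simpa using hi) hex
  refine ⟨⟨?_, ?_⟩, ⟨?_, ?_⟩, ⟨h₀, hcomp₀.symm⟩, ?_⟩
  · rw [hdμ₀]; exact inf_le_left
  · intro i hlt hex
    rw [hdμ₀] at hlt
    have hlt' : Λ.d lam i < m i := by
      have := hpi i; rw [hpi i] at hlt; omega
    have hν0 : Λ.d ν₀ i = 0 := by rw [hdν₀i i, hpi i]; omega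
    -- propagate edge from r ν₀ (= s μ₀) to s ν₀ (= s lam)
    obtain ⟨g, hg1, hg2⟩ := hex
    have := Λ.edge_propagate hlc (∑ j, Λ.d ν₀ j) ν₀ i rfl hν0
      ⟨g, hg1, hg2.trans h₀⟩
    exact hnoedge i (by have := hmn i; omega) this
  · intro i
    rw [hdν₀i i, hpi i]
    have := hmn i
    simp only []
    omega
  · intro i hlt
    rw [hdν₀i i, hpi i] at hlt
    exact hnoedge i (by omega)
  · intro μ ν h hμm hνn hc
    have hdsum : Λ.d lam = Λ.d μ + Λ.d ν := by rw [← hc, Λ.d_comp]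
    have hdμ : Λ.d μ = p := by
      funext i
      rw [hpi i]
      have h1 : Λ.d μ i ≤ m i := hμm.1 i
      have hsumi : Λ.d lam i = Λ.d μ i + Λ.d ν i := by
        have := congrFun hdsum i; simpa using this
      by_cases hcase : Λ.d μ i < m i
      · have hν0 : Λ.d ν i = 0 := by
          by_contra hne
          obtain ⟨f, ν', hf, hdf, hdν', hν, hrf⟩ :=
            Λ.exists_first_edge ν i (Nat.pos_of_ne_zero hne)
          exact hμm.2 i hcase ⟨f, hdf, hrf.trans h.symm⟩
        omega
      · omega
    have hdν : Λ.d ν = Λ.d lam - p := by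
      funext i
      have hsumi : Λ.d lam i = Λ.d μ i + Λ.d ν i := by
        have := congrFun hdsum i; simpa using this
      have := congrFun hdμ i
      simp only [Pi.sub_apply]
      omega
    have hrμ : Λ.r μ = Λ.r lam := by rw [← hc, Λ.r_comp]
    have hsν : Λ.s ν = Λ.s lam := by rw [← hc, Λ.s_comp]
    constructor
    · refine ((Λ.seg_eq lam 0 p (zero_le) inf_le_right (Λ.id (Λ.r lam)) μ ν
        (by rw [Λ.s_id]; exact hrμ.symm) h (Λ.d_id _)
        (by rw [hdμ]; funext i; simp) ?_).symm).trans hμseg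
      exact hc.symm.trans (Λ.id_comp' (Λ.comp μ ν h) (Λ.r lam)
        (by rw [Λ.r_comp]; exact hrμ) _).symm
    · have hbc : Λ.s ν = Λ.r (Λ.id (Λ.s lam)) := by rw [Λ.r_id]; exact hsν
      refine ((Λ.seg_eq lam p (Λ.d lam) inf_le_right le_rfl μ ν (Λ.id (Λ.s lam))
        h hbc hdμ hdν ?_).symm).trans hνseg
      refine hc.symm.trans (Λ.comp_congr μ μ ν (Λ.comp ν (Λ.id (Λ.s lam)) hbc) rfl ?_ _ _)
      exact (Λ.comp_id' ν (Λ.s lam) hsν hbc).symm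


end KGraph
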